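/- Let ρ be a monotone functional on bounded real random variables with convex support, and let ρ̊(X̃) = ρ(X̃′ + Ũ) − ρ(Ũ) be its noise extension to all bounded random variables (with X̃′ a copy of X̃ and Ũ a sufficiently large independent uniform noise). If X̃ ≥ Ỹ almost surely for bounded random variables X̃, Ỹ, then ρ̊(X̃) ≥ ρ̊(Ỹ). -/

import Mathlib

open MeasureTheory ProbabilityTheory

/-- A bounded random variable. -/
def Bdd {Ω : Type*} (X : Ω → ℝ) : Prop := ∃ M : ℝ, ∀ ω, |X ω| ≤ M

/-- The support of a real random variable: the smallest closed set of full
probability. -/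
def suppRV {Ω : Type*} [MeasureSpace Ω] (X : Ω → ℝ) : Set ℝ :=
  ⋂₀ {C : Set ℝ | IsClosed C ∧ volume (X ⁻¹' C) = 1}

/-- The uniform distribution on `[a, b]` (Dirac mass if `a = b`). -/
noncomputable def unif (a b : ℝ) : Measure ℝ :=
  if a = b then Measure.dirac a else ProbabilityTheory.cond volume (Set.Icc a b)

section helpers
variable {Ω : Type*} [MeasureSpace Ω]

lemma suppRV_isClosed (X : Ω → ℝ) : IsClosed (suppRV X) :=
  isClosed_sInter fun _ hC => hC.1

lemma suppRV_subset {X : Ω → ℝ} {C : Set ℝ} (hC : IsClosed C)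
    (h : volume (X ⁻¹' C) = 1) : suppRV X ⊆ C :=
  Set.sInter_subset_of_mem ⟨hC, h⟩

lemma suppRV_eq_of_map_eq {X Y : Ω → ℝ} (hX : Measurable X) (hY : Measurable Y)
    (h : Measure.map X volume = Measure.map Y volume) : suppRV X = suppRV Y := by
  have key : ∀ C : Set ℝ, IsClosed C → volume (X ⁻¹' C) = volume (Y ⁻¹' C) := by
    intro C hC
    rw [← Measure.map_apply hX hC.measurableSet, ← Measure.map_apply hY hC.measurableSet, h]
  have hset : {C : Set ℝ | IsClosed C ∧ volume (X ⁻¹' C) = 1}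
      = {C : Set ℝ | IsClosed C ∧ volume (Y ⁻¹' C) = 1} := by
    ext C
    simp only [Set.mem_setOf_eq]
    exact ⟨fun ⟨h1, h2⟩ => ⟨h1, (key C h1) ▸ h2⟩, fun ⟨h1, h2⟩ => ⟨h1, (key C h1).trans h2⟩⟩
  rw [suppRV, suppRV, hset]

variable [IsProbabilityMeasure (volume : Measure Ω)]

lemma measure_pos_of_mem_suppRV {X : Ω → ℝ} (hX : Measurable X) {V : Set ℝ}
    (hV : IsOpen V) {x : ℝ} (hx : x ∈ suppRV X) (hxV : x ∈ V) :
    0 < volume (X ⁻¹' V) := by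
  rcases eq_zero_or_pos (volume (X ⁻¹' V)) with h0 | h
  · exfalso
    have hC : volume (X ⁻¹' Vᶜ) = 1 := by
      rw [Set.preimage_compl, measure_compl (hX hV.measurableSet) (measure_ne_top _ _), h0,
        measure_univ, tsub_zero]
    exact (suppRV_subset hV.isClosed_compl hC hx) hxV
  · exact h

lemma suppRV_full {X : Ω → ℝ} (hX : Measurable X) :
    volume (X ⁻¹' suppRV X) = 1 := by
  set F := {C : Set ℝ | IsClosed C ∧ volume (X ⁻¹' C) = 1} with hF
  obtain ⟨T, hTc, hTU⟩ := TopologicalSpace.isOpen_iUnion_countable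
    (fun C : F => (C : Set ℝ)ᶜ) (fun C => C.2.1.isOpen_compl)
  have hcompl : (suppRV X)ᶜ = ⋃ C : F, (C : Set ℝ)ᶜ := by
    rw [suppRV, Set.sInter_eq_iInter, Set.compl_iInter]
  have hnull : volume (X ⁻¹' (suppRV X)ᶜ) = 0 := by
    rw [hcompl, ← hTU, Set.preimage_iUnion₂]
    refine measure_biUnion_null_iff hTc |>.2 ?_
    intro C _
    rw [Set.preimage_compl, measure_compl (hX C.2.1.measurableSet) (measure_ne_top _ _),
      C.2.2, measure_univ, tsub_self]
  have hms : MeasurableSet (X ⁻¹' suppRV X) := hX (suppRV_isClosed X).measurableSet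
  rw [Set.preimage_compl] at hnull
  exact (prob_compl_eq_zero_iff hms).1 hnull



lemma unif_Icc {L : ℝ} (hL : 0 ≤ L) : unif 0 L (Set.Icc 0 L) = 1 := by
  rcases eq_or_lt_of_le hL with h0 | h0
  · rw [unif, if_pos h0, Measure.dirac_apply' _ measurableSet_Icc,
      Set.indicator_of_mem (by exact ⟨le_refl _, hL⟩)]
    rfl
  · rw [unif, if_neg (ne_of_lt h0), cond_apply measurableSet_Icc, Set.inter_self,
      Real.volume_Icc]
    exact ENNReal.inv_mul_cancel (by simp [h0]) (by simp)

lemma unif_Ioo_pos {L : ℝ} (hL : 0 ≤ L) {u ε : ℝ} (hu : u ∈ Set.Icc 0 L) (hε : 0 < ε) :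
    0 < unif 0 L (Set.Ioo (u - ε) (u + ε)) := by
  obtain ⟨hu0, huL⟩ := hu
  rcases eq_or_lt_of_le hL with h0 | h0
  · have hu' : u = 0 := le_antisymm (h0 ▸ huL) hu0
    rw [unif, if_pos h0, Measure.dirac_apply' _ measurableSet_Ioo,
      Set.indicator_of_mem (by constructor <;> [skip; skip] <;> simp [hu'] <;> linarith)]
    norm_num
  · rw [unif, if_neg (ne_of_lt h0), cond_apply measurableSet_Icc]
    have hsub : Set.Ioo (max 0 (u - ε)) (min L (u + ε)) ⊆
        Set.Icc 0 L ∩ Set.Ioo (u - ε) (u + ε) := by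
      rintro y ⟨hy1, hy2⟩
      refine ⟨⟨le_of_lt (lt_of_le_of_lt (le_max_left _ _) hy1),
        le_of_lt (lt_of_lt_of_le hy2 (min_le_left _ _))⟩,
        lt_of_le_of_lt (le_max_right _ _) hy1, lt_of_lt_of_le hy2 (min_le_right _ _)⟩
    have hlt : max 0 (u - ε) < min L (u + ε) := by
      rw [max_lt_iff, lt_min_iff, lt_min_iff]
      exact ⟨⟨h0, by linarith⟩, by linarith, by linarith⟩
    have hpos : 0 < volume (Set.Icc 0 L ∩ Set.Ioo (u - ε) (u + ε)) :=
      lt_of_lt_of_le (by rw [Real.volume_Ioo]; exact ENNReal.ofReal_pos.2 (by linarith))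
        (measure_mono hsub)
    exact ENNReal.mul_pos (by simp [Real.volume_Icc]) hpos.ne'

lemma suppRV_mem_Icc {X : Ω → ℝ} {B : ℝ} (hB : ∀ ω, |X ω| ≤ B) :
    suppRV X ⊆ Set.Icc (-B) B :=
  suppRV_subset isClosed_Icc (by
    have h : X ⁻¹' Set.Icc (-B) B = Set.univ := by
      ext ω
      simpa [Set.mem_Icc] using abs_le.1 (hB ω)
    rw [h, measure_univ])

lemma suppRV_nonempty {X : Ω → ℝ} (hX : Measurable X) : (suppRV X).Nonempty := by
  by_contra h
  rw [Set.not_nonempty_iff_eq_empty] at h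
  have h2 := suppRV_full hX
  rw [h] at h2
  simp at h2

lemma suppRV_range_le {X : Ω → ℝ} (hX : Bdd X) (hXm : Measurable X) :
    sSup (suppRV X) - sInf (suppRV X) ≤ essSup X volume - essInf X volume := by
  obtain ⟨B, hB⟩ := hX
  have hsub := suppRV_mem_Icc hB
  have hne := suppRV_nonempty hXm
  have hbddA : BddAbove (suppRV X) := ⟨B, fun x hx => (hsub hx).2⟩
  have hbddB : BddBelow (suppRV X) := ⟨-B, fun x hx => (hsub hx).1⟩
  have hMmem : sSup (suppRV X) ∈ suppRV X := (suppRV_isClosed X).csSup_mem hne hbddA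
  have hmmem : sInf (suppRV X) ∈ suppRV X := (suppRV_isClosed X).csInf_mem hne hbddB
  have hub : Filter.IsBoundedUnder (· ≤ ·) (ae (volume : Measure Ω)) X :=
    Filter.isBoundedUnder_of ⟨B, fun ω => (abs_le.1 (hB ω)).2⟩
  have hlb : Filter.IsBoundedUnder (· ≥ ·) (ae (volume : Measure Ω)) X :=
    Filter.isBoundedUnder_of ⟨-B, fun ω => (abs_le.1 (hB ω)).1⟩
  have h1 : sSup (suppRV X) ≤ essSup X volume := by
    by_contra hlt
    push_neg at hlt
    have hae : ∀ᵐ ω, X ω ≤ essSup X volume := ae_le_essSup hub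
    have hnull : volume (X ⁻¹' Set.Ioi (essSup X volume)) = 0 := by
      have h := ae_iff.mp hae
      have heq : X ⁻¹' Set.Ioi (essSup X volume) = {ω | ¬ X ω ≤ essSup X volume} := by
        ext ω; simp [not_le]
      rw [heq]; exact h
    exact absurd hnull
      (measure_pos_of_mem_suppRV hXm isOpen_Ioi hMmem hlt).ne'
  have h2 : essInf X volume ≤ sInf (suppRV X) := by
    by_contra hlt
    push_neg at hlt
    have hae : ∀ᵐ ω, essInf X volume ≤ X ω := ae_essInf_le hlb
    have hnull : volume (X ⁻¹' Set.Iio (essInf X volume)) = 0 := by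
      have h := ae_iff.mp hae
      have heq : X ⁻¹' Set.Iio (essInf X volume) = {ω | ¬ essInf X volume ≤ X ω} := by
        ext ω; simp [not_le]
      rw [heq]; exact h
    exact absurd hnull
      (measure_pos_of_mem_suppRV hXm isOpen_Iio hmmem hlt).ne'
  linarith

lemma suppRV_add_eq {X U : Ω → ℝ} {L : ℝ}
    (hXm : Measurable X) (hUm : Measurable U) (hL : 0 ≤ L)
    {B : ℝ} (hB : ∀ ω, |X ω| ≤ B)
    (hrange : sSup (suppRV X) - sInf (suppRV X) ≤ L)
    (hUIcc : ∀ ω, U ω ∈ Set.Icc 0 L)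
    (hUpos : ∀ u ∈ Set.Icc 0 L, ∀ ε > 0, 0 < volume (U ⁻¹' Set.Ioo (u - ε) (u + ε)))
    (hind : IndepFun X U volume) :
    suppRV (fun ω => X ω + U ω)
      = Set.Icc (sInf (suppRV X)) (sSup (suppRV X) + L) := by
  have hsub := suppRV_mem_Icc hB
  have hne := suppRV_nonempty hXm
  have hbddA : BddAbove (suppRV X) := ⟨B, fun x hx => (hsub hx).2⟩
  have hbddB : BddBelow (suppRV X) := ⟨-B, fun x hx => (hsub hx).1⟩
  have hMmem : sSup (suppRV X) ∈ suppRV X := (suppRV_isClosed X).csSup_mem hne hbddA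
  have hmmem : sInf (suppRV X) ∈ suppRV X := (suppRV_isClosed X).csInf_mem hne hbddB
  set m := sInf (suppRV X)
  set M := sSup (suppRV X)
  apply Set.Subset.antisymm
  · apply suppRV_subset isClosed_Icc
    have h1 := suppRV_full hXm
    have hss : X ⁻¹' suppRV X ⊆ (fun ω => X ω + U ω) ⁻¹' Set.Icc m (M + L) := by
      intro ω hω
      obtain ⟨h2, h3⟩ := hUIcc ω
      have h4 : m ≤ X ω := csInf_le hbddB hω
      have h5 : X ω ≤ M := le_csSup hbddA hω
      exact ⟨by simpa using by linarith, by simpa using by linarith⟩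
    refine le_antisymm prob_le_one ?_
    calc (1 : ENNReal) = volume (X ⁻¹' suppRV X) := h1.symm
      _ ≤ _ := measure_mono hss
  · intro x hx
    obtain ⟨hx1, hx2⟩ := hx
    set s := if x ≤ M then m else M with hs
    have hsS : s ∈ suppRV X := by rw [hs]; split <;> assumption
    have hu0 : x - s ∈ Set.Icc 0 L := by
      rw [hs]
      split
      · rename_i hxM
        constructor <;> [linarith; linarith]
      · rename_i hxM
        push_neg at hxM
        constructor <;> [linarith; linarith]
    simp only [suppRV, Set.mem_sInter, Set.mem_setOf_eq]
    rintro C ⟨hCc, hCf⟩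
    by_contra hxC
    obtain ⟨ε, hε, hball⟩ := Metric.isOpen_iff.1 hCc.isOpen_compl x hxC
    have hA : 0 < volume (X ⁻¹' Set.Ioo (s - ε/2) (s + ε/2)) :=
      measure_pos_of_mem_suppRV hXm isOpen_Ioo hsS (by constructor <;> linarith)
    have hBp : 0 < volume (U ⁻¹' Set.Ioo ((x - s) - ε/2) ((x - s) + ε/2)) :=
      hUpos _ hu0 _ (by linarith)
    have hprod := hind.measure_inter_preimage_eq_mul
      (Set.Ioo (s - ε/2) (s + ε/2)) (Set.Ioo ((x - s) - ε/2) ((x - s) + ε/2))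
      measurableSet_Ioo measurableSet_Ioo
    have h0 : 0 < volume (X ⁻¹' Set.Ioo (s - ε/2) (s + ε/2)
        ∩ U ⁻¹' Set.Ioo ((x - s) - ε/2) ((x - s) + ε/2)) := by
      rw [hprod]
      exact ENNReal.mul_pos hA.ne' hBp.ne'
    have hsubset : X ⁻¹' Set.Ioo (s - ε/2) (s + ε/2)
        ∩ U ⁻¹' Set.Ioo ((x - s) - ε/2) ((x - s) + ε/2)
        ⊆ (fun ω => X ω + U ω) ⁻¹' Cᶜ := by
      rintro ω ⟨⟨ha1, ha2⟩, ⟨hb1, hb2⟩⟩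
      apply hball
      simp only [Metric.mem_ball, Real.dist_eq]
      rw [abs_lt]
      constructor <;> linarith
    have hnull : volume ((fun ω => X ω + U ω) ⁻¹' Cᶜ) = 0 := by
      rw [Set.preimage_compl]
      exact (prob_compl_eq_zero_iff ((hXm.add hUm) hCc.measurableSet)).2 hCf
    exact absurd hnull (lt_of_lt_of_le h0 (measure_mono hsubset)).ne'

end helpers

/-- Monotonicity of the noise extension. If `ρ` is monotone on
bounded random variables with convex support and `ρ̊` is its noise extension
(`ρ̊(X̃) = ρ(X̃' + Ũ) − ρ(Ũ)` for any copy `X̃'` of `X̃` with a sufficiently large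
independent uniform noise `Ũ`), and the space is rich enough to realize joint
copies with independent uniform noise, then `X̃ ≥ Ỹ` a.s. implies
`ρ̊(X̃) ≥ ρ̊(Ỹ)`. -/
theorem stmt18 {Ω : Type*} [MeasureSpace Ω] [IsProbabilityMeasure (volume : Measure Ω)]
    (ρ ρo : (Ω → ℝ) → ℝ)
    (hmono : ∀ X Y : Ω → ℝ, Bdd X → Bdd Y → Measurable X → Measurable Y →
      Convex ℝ (suppRV X) → Convex ℝ (suppRV Y) → (∀ᵐ ω, Y ω ≤ X ω) → ρ Y ≤ ρ X)
    (hext : ∀ (X X' U : Ω → ℝ) (L : ℝ), Bdd X → Bdd X' →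
      Measurable X → Measurable X' → Measurable U →
      Measure.map X' volume = Measure.map X volume →
      essSup X volume - essInf X volume ≤ L →
      Measure.map U volume = unif 0 L → IndepFun X' U volume →
      ρo X = ρ (fun ω => X' ω + U ω) - ρ U)
    (hrich : ∀ (X Y : Ω → ℝ) (L : ℝ), Measurable X → Measurable Y → 0 ≤ L →
      ∃ X' Y' U : Ω → ℝ, Measurable X' ∧ Measurable Y' ∧ Measurable U ∧
        Measure.map (fun ω => (X' ω, Y' ω)) volume
          = Measure.map (fun ω => (X ω, Y ω)) volume ∧
        Measure.map U volume = unif 0 L ∧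
        IndepFun (fun ω => (X' ω, Y' ω)) U volume)
    (X Y : Ω → ℝ) (hX : Bdd X) (hY : Bdd Y) (hXm : Measurable X) (hYm : Measurable Y)
    (hXY : ∀ᵐ ω, Y ω ≤ X ω) :
    ρo Y ≤ ρo X := by
  obtain ⟨MX, hMX⟩ := hX
  obtain ⟨MY, hMY⟩ := hY
  set BX := |MX| with hBXdef
  set BY := |MY| with hBYdef
  have hBX0 : 0 ≤ BX := abs_nonneg _
  have hBY0 : 0 ≤ BY := abs_nonneg _
  have hXb : ∀ ω, |X ω| ≤ BX := fun ω => (hMX ω).trans (le_abs_self _)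
  have hYb : ∀ ω, |Y ω| ≤ BY := fun ω => (hMY ω).trans (le_abs_self _)
  set L := max (max (essSup X volume - essInf X volume)
      (essSup Y volume - essInf Y volume)) 0 with hLdef
  have hL : 0 ≤ L := le_max_right _ _
  have hLX : essSup X volume - essInf X volume ≤ L :=
    le_trans (le_max_left _ _) (le_max_left _ _)
  have hLY : essSup Y volume - essInf Y volume ≤ L :=
    le_trans (le_max_right _ _) (le_max_left _ _)
  obtain ⟨X', Y', U, hX'm, hY'm, hUm, hjoint, hUlaw, hindp⟩ := hrich X Y L hXm hYm hL
  set X'' : Ω → ℝ := fun ω => min BX (max (-BX) (X' ω)) with hX''def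
  set Y'' : Ω → ℝ := fun ω => min BY (max (-BY) (Y' ω)) with hY''def
  set U'' : Ω → ℝ := fun ω => min L (max 0 (U ω)) with hU''def
  have hX''m : Measurable X'' :=
    Measurable.min measurable_const (Measurable.max measurable_const hX'm)
  have hY''m : Measurable Y'' :=
    Measurable.min measurable_const (Measurable.max measurable_const hY'm)
  have hU''m : Measurable U'' :=
    Measurable.min measurable_const (Measurable.max measurable_const hUm)
  have hpairm : Measurable (fun ω => (X' ω, Y' ω)) := hX'm.prodMk hY'm
  have hpairm0 : Measurable (fun ω => (X ω, Y ω)) := hXm.prodMk hYm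
  have hX'law : Measure.map X' volume = Measure.map X volume := by
    have h1 : X' = (Prod.fst : ℝ × ℝ → ℝ) ∘ (fun ω => (X' ω, Y' ω)) := rfl
    have h2 : X = (Prod.fst : ℝ × ℝ → ℝ) ∘ (fun ω => (X ω, Y ω)) := rfl
    rw [h1, h2, ← Measure.map_map measurable_fst hpairm,
      ← Measure.map_map measurable_fst hpairm0, hjoint]
  have hY'law : Measure.map Y' volume = Measure.map Y volume := by
    have h1 : Y' = (Prod.snd : ℝ × ℝ → ℝ) ∘ (fun ω => (X' ω, Y' ω)) := rfl
    have h2 : Y = (Prod.snd : ℝ × ℝ → ℝ) ∘ (fun ω => (X ω, Y ω)) := rfl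
    rw [h1, h2, ← Measure.map_map measurable_snd hpairm,
      ← Measure.map_map measurable_snd hpairm0, hjoint]
  have haeX' : ∀ᵐ ω, X' ω ∈ Set.Icc (-BX) BX := by
    have hfull : volume (X' ⁻¹' Set.Icc (-BX) BX) = 1 := by
      rw [← Measure.map_apply hX'm measurableSet_Icc, hX'law,
        Measure.map_apply hXm measurableSet_Icc]
      have h : X ⁻¹' Set.Icc (-BX) BX = Set.univ := by
        ext ω; simpa [Set.mem_Icc] using abs_le.1 (hXb ω)
      rw [h, measure_univ]
    rw [ae_iff]
    have h : {ω | ¬ X' ω ∈ Set.Icc (-BX) BX} = (X' ⁻¹' Set.Icc (-BX) BX)ᶜ := rfl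
    rw [h]
    exact (prob_compl_eq_zero_iff (hX'm measurableSet_Icc)).2 hfull
  have haeY' : ∀ᵐ ω, Y' ω ∈ Set.Icc (-BY) BY := by
    have hfull : volume (Y' ⁻¹' Set.Icc (-BY) BY) = 1 := by
      rw [← Measure.map_apply hY'm measurableSet_Icc, hY'law,
        Measure.map_apply hYm measurableSet_Icc]
      have h : Y ⁻¹' Set.Icc (-BY) BY = Set.univ := by
        ext ω; simpa [Set.mem_Icc] using abs_le.1 (hYb ω)
      rw [h, measure_univ]
    rw [ae_iff]
    have h : {ω | ¬ Y' ω ∈ Set.Icc (-BY) BY} = (Y' ⁻¹' Set.Icc (-BY) BY)ᶜ := rfl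
    rw [h]
    exact (prob_compl_eq_zero_iff (hY'm measurableSet_Icc)).2 hfull
  have haeU : ∀ᵐ ω, U ω ∈ Set.Icc 0 L := by
    have hfull : volume (U ⁻¹' Set.Icc 0 L) = 1 := by
      rw [← Measure.map_apply hUm measurableSet_Icc, hUlaw]
      exact unif_Icc hL
    rw [ae_iff]
    have h : {ω | ¬ U ω ∈ Set.Icc 0 L} = (U ⁻¹' Set.Icc 0 L)ᶜ := rfl
    rw [h]
    exact (prob_compl_eq_zero_iff (hUm measurableSet_Icc)).2 hfull
  have hX''ae : X'' =ᵐ[volume] X' := by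
    filter_upwards [haeX'] with ω hω
    show min BX (max (-BX) (X' ω)) = X' ω
    rw [max_eq_right hω.1, min_eq_right hω.2]
  have hY''ae : Y'' =ᵐ[volume] Y' := by
    filter_upwards [haeY'] with ω hω
    show min BY (max (-BY) (Y' ω)) = Y' ω
    rw [max_eq_right hω.1, min_eq_right hω.2]
  have hU''ae : U'' =ᵐ[volume] U := by
    filter_upwards [haeU] with ω hω
    show min L (max 0 (U ω)) = U ω
    rw [max_eq_right hω.1, min_eq_right hω.2]
  have hX''law : Measure.map X'' volume = Measure.map X volume :=
    (Measure.map_congr hX''ae).trans hX'law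
  have hY''law : Measure.map Y'' volume = Measure.map Y volume :=
    (Measure.map_congr hY''ae).trans hY'law
  have hU''law : Measure.map U'' volume = unif 0 L :=
    (Measure.map_congr hU''ae).trans hUlaw
  have hX''b : ∀ ω, |X'' ω| ≤ BX := fun ω =>
    abs_le.2 ⟨le_min (neg_le_self hBX0) (le_max_left _ _), min_le_left _ _⟩
  have hY''b : ∀ ω, |Y'' ω| ≤ BY := fun ω =>
    abs_le.2 ⟨le_min (neg_le_self hBY0) (le_max_left _ _), min_le_left _ _⟩
  have hU''Icc : ∀ ω, U'' ω ∈ Set.Icc 0 L := fun ω =>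
    ⟨le_min hL (le_max_left _ _), min_le_left _ _⟩
  have hindX : IndepFun X'' U'' volume := by
    have h := hindp.comp (φ := fun p : ℝ × ℝ => min BX (max (-BX) p.1))
      (ψ := fun t : ℝ => min L (max 0 t))
      (Measurable.min measurable_const (Measurable.max measurable_const measurable_fst))
      (Measurable.min measurable_const (Measurable.max measurable_const measurable_id))
    exact h
  have hindY : IndepFun Y'' U'' volume := by
    have h := hindp.comp (φ := fun p : ℝ × ℝ => min BY (max (-BY) p.2))
      (ψ := fun t : ℝ => min L (max 0 t))
      (Measurable.min measurable_const (Measurable.max measurable_const measurable_snd))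
      (Measurable.min measurable_const (Measurable.max measurable_const measurable_id))
    exact h
  have hY'X' : ∀ᵐ ω, Y' ω ≤ X' ω := by
    have hsetm : MeasurableSet {p : ℝ × ℝ | p.2 ≤ p.1} :=
      measurableSet_le measurable_snd measurable_fst
    have h1 : volume ((fun ω => (X' ω, Y' ω)) ⁻¹' {p : ℝ × ℝ | p.2 ≤ p.1}) = 1 := by
      rw [← Measure.map_apply hpairm hsetm, hjoint, Measure.map_apply hpairm0 hsetm]
      have h2 : (fun ω => (X ω, Y ω)) ⁻¹' {p : ℝ × ℝ | p.2 ≤ p.1} = {ω | Y ω ≤ X ω} := rfl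
      rw [h2]
      have h3 : MeasurableSet {ω | Y ω ≤ X ω} := measurableSet_le hYm hXm
      rw [← prob_compl_eq_zero_iff h3] at *
      have h4 : {ω | Y ω ≤ X ω}ᶜ = {ω | ¬ Y ω ≤ X ω} := rfl
      rw [h4]
      exact ae_iff.mp hXY
    rw [ae_iff]
    have h : {ω | ¬ Y' ω ≤ X' ω}
        = ((fun ω => (X' ω, Y' ω)) ⁻¹' {p : ℝ × ℝ | p.2 ≤ p.1})ᶜ := rfl
    rw [h]
    exact (prob_compl_eq_zero_iff (hpairm hsetm)).2 h1
  have hY''X'' : ∀ᵐ ω, Y'' ω ≤ X'' ω := by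
    filter_upwards [hY'X', hX''ae, hY''ae] with ω h1 h2 h3
    rw [h2, h3]; exact h1
  have hU''pos : ∀ u ∈ Set.Icc 0 L, ∀ ε > 0,
      0 < volume (U'' ⁻¹' Set.Ioo (u - ε) (u + ε)) := by
    intro u hu ε hε
    rw [← Measure.map_apply hU''m measurableSet_Ioo, hU''law]
    exact unif_Ioo_pos hL hu hε
  have heX := hext X X'' U'' L ⟨MX, hMX⟩ ⟨BX, hX''b⟩ hXm hX''m hU''m hX''law hLX hU''law hindX
  have heY := hext Y Y'' U'' L ⟨MY, hMY⟩ ⟨BY, hY''b⟩ hYm hY''m hU''m hY''law hLY hU''law hindY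
  rw [heX, heY]
  apply sub_le_sub_right
  have hconvX : Convex ℝ (suppRV (fun ω => X'' ω + U'' ω)) := by
    have hsupp : suppRV X'' = suppRV X := suppRV_eq_of_map_eq hX''m hXm hX''law
    have hrangeX := suppRV_range_le ⟨MX, hMX⟩ hXm
    have heq := suppRV_add_eq hX''m hU''m hL hX''b
      (by rw [hsupp]; linarith) hU''Icc hU''pos hindX
    rw [heq]
    exact convex_Icc _ _
  have hconvY : Convex ℝ (suppRV (fun ω => Y'' ω + U'' ω)) := by
    have hsupp : suppRV Y'' = suppRV Y := suppRV_eq_of_map_eq hY''m hYm hY''law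
    have hrangeY := suppRV_range_le ⟨MY, hMY⟩ hYm
    have heq := suppRV_add_eq hY''m hU''m hL hY''b
      (by rw [hsupp]; linarith) hU''Icc hU''pos hindY
    rw [heq]
    exact convex_Icc _ _
  apply hmono (fun ω => X'' ω + U'' ω) (fun ω => Y'' ω + U'' ω)
  · exact ⟨BX + L, fun ω => (abs_add_le _ _).trans (add_le_add (hX''b ω)
      (abs_le.2 ⟨by linarith [(hU''Icc ω).1], (hU''Icc ω).2⟩))⟩
  · exact ⟨BY + L, fun ω => (abs_add_le _ _).trans (add_le_add (hY''b ω)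
      (abs_le.2 ⟨by linarith [(hU''Icc ω).1], (hU''Icc ω).2⟩))⟩
  · exact hX''m.add hU''m
  · exact hY''m.add hU''m
  · exact hconvX
  · exact hconvY
  · filter_upwards [hY''X''] with ω h
    exact add_le_add_left h _
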